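/- arXiv:1804.02718 — 4 statements merged into one kernel-verified Lean document; each statement's English description precedes it below -/
import Mathlib

section
/- Let f, g: [a,b]×[c,d] → ℝ be continuous, nonnegative, and similarly ordered, meaning that ( f(x₁,y₁) − f(x₂,y₂) )( g(x₁,y₁) − g(x₂,y₂) ) ≥ 0 for all points (x₁,y₁), (x₂,y₂) ∈ [a,b]×[c,d]. Then ( ∫_c^d ∫_a^b f(x,y) dx dy )( ∫_c^d ∫_a^b g(x,y) dx dy ) ≤ (b−a)(d−c) ∫_c^d ∫_a^b f(x,y) g(x,y) dx dy. -/
open MeasureTheory Set intervalIntegral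

set_option maxHeartbeats 1000000 in
lemma cheb_aux (S : Set (ℝ × ℝ)) (hS : MeasurableSet S) (hfin : volume S ≠ ⊤)
    (F G : ℝ × ℝ → ℝ)
    (hFi : IntegrableOn F S) (hGi : IntegrableOn G S)
    (hFGi : IntegrableOn (fun p => F p * G p) S)
    (hord : ∀ p ∈ S, ∀ q ∈ S, 0 ≤ (F p - F q) * (G p - G q)) :
    (∫ p in S, F p) * (∫ p in S, G p) ≤ (volume S).toReal * ∫ p in S, F p * G p := by
  set A := (volume S).toReal with hA
  set IF := ∫ p in S, F p with hIF
  set IG := ∫ p in S, G p with hIG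
  set IFG := ∫ p in S, F p * G p with hIFG
  have hconst : ∀ C : ℝ, IntegrableOn (fun _ : ℝ × ℝ => C) S := fun C =>
    integrableOn_const hfin
  have inner : ∀ p ∈ S, (∫ q in S, (F p - F q) * (G p - G q))
      = A * (F p * G p) - F p * IG - G p * IF + IFG := by
    intro p _
    have iA : IntegrableOn (fun _ : ℝ × ℝ => F p * G p) S := hconst _
    have iB : IntegrableOn (fun q : ℝ × ℝ => F p * G q) S := hGi.const_mul _
    have iC : IntegrableOn (fun q : ℝ × ℝ => G p * F q) S := hFi.const_mul _
    have iAB : IntegrableOn (fun q : ℝ × ℝ => F p * G p - F p * G q) S := iA.sub iB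
    have iABC : IntegrableOn (fun q : ℝ × ℝ => F p * G p - F p * G q - G p * F q) S :=
      iAB.sub iC
    calc (∫ q in S, (F p - F q) * (G p - G q))
        = ∫ q in S, ((F p * G p - F p * G q - G p * F q) + F q * G q) := by
          congr 1; ext q; ring
      _ = (∫ q in S, (F p * G p - F p * G q - G p * F q)) + IFG :=
          integral_add iABC hFGi
      _ = ((∫ q in S, (F p * G p - F p * G q)) - ∫ q in S, G p * F q) + IFG := by
          rw [integral_sub iAB iC]
      _ = (((∫ (_ : ℝ × ℝ) in S, F p * G p) - ∫ q in S, F p * G q)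
            - ∫ q in S, G p * F q) + IFG := by
          rw [integral_sub iA iB]
      _ = A * (F p * G p) - F p * IG - G p * IF + IFG := by
          rw [setIntegral_const, measureReal_def, ← hA, MeasureTheory.integral_const_mul,
            MeasureTheory.integral_const_mul, smul_eq_mul, hIF, hIG]
  have key : 0 ≤ ∫ p in S, ∫ q in S, (F p - F q) * (G p - G q) :=
    setIntegral_nonneg hS fun p hp => setIntegral_nonneg hS fun q hq => hord p hp q hq
  have iA' : IntegrableOn (fun p : ℝ × ℝ => A * (F p * G p)) S := hFGi.const_mul _
  have iB' : IntegrableOn (fun p : ℝ × ℝ => F p * IG) S := hFi.mul_const _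
  have iC' : IntegrableOn (fun p : ℝ × ℝ => G p * IF) S := hGi.mul_const _
  have iAB' : IntegrableOn (fun p : ℝ × ℝ => A * (F p * G p) - F p * IG) S := iA'.sub iB'
  have iABC' : IntegrableOn (fun p : ℝ × ℝ => A * (F p * G p) - F p * IG - G p * IF) S :=
    iAB'.sub iC'
  have h2 : (∫ p in S, ∫ q in S, (F p - F q) * (G p - G q))
      = 2 * A * IFG - 2 * IF * IG := by
    calc (∫ p in S, ∫ q in S, (F p - F q) * (G p - G q))
        = ∫ p in S, (A * (F p * G p) - F p * IG - G p * IF + IFG) :=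
          setIntegral_congr_fun hS inner
      _ = (∫ p in S, (A * (F p * G p) - F p * IG - G p * IF)) + ∫ (_ : ℝ × ℝ) in S, IFG :=
          integral_add iABC' (hconst _)
      _ = ((∫ p in S, (A * (F p * G p) - F p * IG)) - ∫ p in S, G p * IF)
            + ∫ (_ : ℝ × ℝ) in S, IFG := by rw [integral_sub iAB' iC']
      _ = (((∫ p in S, A * (F p * G p)) - ∫ p in S, F p * IG) - ∫ p in S, G p * IF)
            + ∫ (_ : ℝ × ℝ) in S, IFG := by rw [integral_sub iA' iB']
      _ = 2 * A * IFG - 2 * IF * IG := by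
          rw [setIntegral_const, measureReal_def, ← hA, MeasureTheory.integral_const_mul,
            MeasureTheory.integral_mul_const, MeasureTheory.integral_mul_const,
            smul_eq_mul, hIF, hIG, hIFG]
          ring
  rw [h2] at key
  linarith
set_option maxHeartbeats 1000000 in
/-- **Chebyshev integral inequality** for continuous, nonnegative, similarly ordered
functions of two variables on a rectangle `[a,b] × [c,d]`. -/
theorem chebyshev_integral_inequality_two_vars
    (a b c d : ℝ) (hab : a < b) (hcd : c < d)
    (f g : ℝ × ℝ → ℝ)
    (hf : ContinuousOn f (Icc a b ×ˢ Icc c d))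
    (hg : ContinuousOn g (Icc a b ×ˢ Icc c d))
    (hf0 : ∀ p ∈ Icc a b ×ˢ Icc c d, 0 ≤ f p)
    (hg0 : ∀ p ∈ Icc a b ×ˢ Icc c d, 0 ≤ g p)
    (hord : ∀ p ∈ Icc a b ×ˢ Icc c d, ∀ q ∈ Icc a b ×ˢ Icc c d,
      0 ≤ (f p - f q) * (g p - g q)) :
    (∫ y in c..d, ∫ x in a..b, f (x, y)) * (∫ y in c..d, ∫ x in a..b, g (x, y))
      ≤ (b - a) * (d - c) * ∫ y in c..d, ∫ x in a..b, f (x, y) * g (x, y) := by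
  set T : Set (ℝ × ℝ) := Icc c d ×ˢ Icc a b with hT
  have hTmeas : MeasurableSet T := measurableSet_Icc.prod measurableSet_Icc
  have hTcomp : IsCompact T := isCompact_Icc.prod isCompact_Icc
  have hswap : ∀ p : ℝ × ℝ, p ∈ T → (p.2, p.1) ∈ Icc a b ×ˢ Icc c d := by
    rintro ⟨y, x⟩ ⟨hy, hx⟩; exact ⟨hx, hy⟩
  have hint : ∀ h : ℝ × ℝ → ℝ, ContinuousOn h (Icc a b ×ˢ Icc c d) →
      IntegrableOn (fun p : ℝ × ℝ => h (p.2, p.1)) T := fun h hh =>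
    (hh.comp continuous_swap.continuousOn hswap).integrableOn_compact hTcomp
  have conv : ∀ h : ℝ × ℝ → ℝ, ContinuousOn h (Icc a b ×ˢ Icc c d) →
      (∫ y in c..d, ∫ x in a..b, h (x, y)) = ∫ p in T, h (p.2, p.1) := by
    intro h hh
    have hint' : IntegrableOn (fun p : ℝ × ℝ => h (p.2, p.1)) (Icc c d ×ˢ Icc a b)
        ((volume : Measure ℝ).prod (volume : Measure ℝ)) := by
      rw [← Measure.volume_eq_prod]; exact hint h hh
    have fub := setIntegral_prod (fun p : ℝ × ℝ => h (p.2, p.1)) hint'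
    rw [← Measure.volume_eq_prod] at fub
    rw [intervalIntegral.integral_of_le hcd.le, ← integral_Icc_eq_integral_Ioc]
    have step : ∀ y : ℝ, (∫ x in a..b, h (x, y)) = ∫ x in Icc a b, h (x, y) := by
      intro y
      rw [intervalIntegral.integral_of_le hab.le, ← integral_Icc_eq_integral_Ioc]
    rw [setIntegral_congr_fun measurableSet_Icc fun y _ => step y]
    exact fub.symm
  have hfgcont : ContinuousOn (fun p => f p * g p) (Icc a b ×ˢ Icc c d) := hf.mul hg
  have hvol : volume T ≠ ⊤ := hTcomp.measure_ne_top
  have hvolT : (volume T).toReal = (d - c) * (b - a) := by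
    rw [hT, Measure.volume_eq_prod, Measure.prod_prod, Real.volume_Icc, Real.volume_Icc,
      ← ENNReal.ofReal_mul (by linarith)]
    exact ENNReal.toReal_ofReal (by nlinarith)
  have key := cheb_aux T hTmeas hvol (fun p => f (p.2, p.1)) (fun p => g (p.2, p.1))
    (hint f hf) (hint g hg) (hint _ hfgcont)
    (fun p hp q hq => hord _ (hswap p hp) _ (hswap q hq))
  rw [hvolT] at key
  rw [conv f hf, conv g hg, conv _ hfgcont]
  calc (∫ p in T, f (p.2, p.1)) * (∫ p in T, g (p.2, p.1))
      ≤ (d - c) * (b - a) * ∫ p in T, f (p.2, p.1) * g (p.2, p.1) := key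
    _ = (b - a) * (d - c) * ∫ p in T, f (p.2, p.1) * g (p.2, p.1) := by ring
end

section
/- Let 0 < s ≤ 1, α ∈ (0,2), and u ∈ C^{1,s}(ℝ²). Then there exists a constant C > 0 such that for every γ ∈ (α,2], every x ∈ ℝ², all integers m,n ≥ 0 with m+n ≤ 1, and every ξ = (ξ,η) ∈ [0,∞)²∖{(0,0)}, |∂_{m,n}ψ_γ(x,(ξ,η))| ≤ C |ξ|^{s+1−γ−(m+n)}, where ∂_{m,n} denotes the partial derivative ∂_ξ^m ∂_η^n (interpreted as a one-sided derivative at points on the coordinate axes) and |ξ| = √(ξ²+η²). -/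
open MeasureTheory Set

/-- The Hölder space `C^{k,s}`: `u` has continuous partial derivatives up to order `k`
and the `k`-th derivatives are uniformly Hölder continuous with exponent `s`. -/
def CkHolder (k : ℕ) (s : ℝ) {E : Type*} [NormedAddCommGroup E] [NormedSpace ℝ E]
    (u : E → ℝ) : Prop :=
  ContDiff ℝ k u ∧ ∃ C : ℝ, 0 < C ∧ ∀ x y : E,
    ‖iteratedFDeriv ℝ k u x - iteratedFDeriv ℝ k u y‖ ≤ C * ‖x - y‖ ^ s

/-- The central difference quotient `ψ_γ(x, ξ)`. -/
noncomputable def psi2 (u : ℝ × ℝ → ℝ) (γ : ℝ) (x ξ : ℝ × ℝ) : ℝ :=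
  Real.sqrt (ξ.1 ^ 2 + ξ.2 ^ 2) ^ (-γ) *
    (u (x.1 + ξ.1, x.2 + ξ.2) + u (x.1 + ξ.1, x.2 - ξ.2) +
     u (x.1 - ξ.1, x.2 + ξ.2) + u (x.1 - ξ.1, x.2 - ξ.2) - 4 * u x)

/-- The partial derivative `∂_{m,n} g = ∂_ξ^m ∂_η^n g` of a function of two real variables. -/
noncomputable def pd (m n : ℕ) (g : ℝ × ℝ → ℝ) (p : ℝ × ℝ) : ℝ :=
  deriv^[m] (fun ξ => deriv^[n] (fun η => g (ξ, η)) p.2) p.1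

/- ## Auxiliary lemmas -/

lemma fderiv_diff_le_iFD (u : (ℝ×ℝ) → ℝ) (x y : ℝ×ℝ) :
    ‖fderiv ℝ u x - fderiv ℝ u y‖ ≤ ‖iteratedFDeriv ℝ 1 u x - iteratedFDeriv ℝ 1 u y‖ := by
  refine ContinuousLinearMap.opNorm_le_bound _ (norm_nonneg _) fun v => ?_
  have h : (fderiv ℝ u x - fderiv ℝ u y) v
      = (iteratedFDeriv ℝ 1 u x - iteratedFDeriv ℝ 1 u y) (fun _ : Fin 1 => v) := by
    simp [iteratedFDeriv_one_apply]
  rw [h]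
  calc ‖(iteratedFDeriv ℝ 1 u x - iteratedFDeriv ℝ 1 u y) (fun _ : Fin 1 => v)‖
      ≤ ‖iteratedFDeriv ℝ 1 u x - iteratedFDeriv ℝ 1 u y‖ * ∏ _i : Fin 1, ‖v‖ :=
        (iteratedFDeriv ℝ 1 u x - iteratedFDeriv ℝ 1 u y).le_opNorm _
    _ = ‖iteratedFDeriv ℝ 1 u x - iteratedFDeriv ℝ 1 u y‖ * ‖v‖ := by simp

lemma taylor_bound_aux (u : (ℝ×ℝ) → ℝ) (hd : ContDiff ℝ 1 u) (s K : ℝ) (hs0 : 0 < s)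
    (hKpos : 0 ≤ K)
    (hK : ∀ x y : ℝ×ℝ, ‖fderiv ℝ u x - fderiv ℝ u y‖ ≤ K * ‖x - y‖ ^ s)
    (a v : ℝ×ℝ) :
    |u (a + v) - u a - fderiv ℝ u a v| ≤ K * ‖v‖ ^ s * ‖v‖ := by
  set L := fderiv ℝ u a with hL
  set f : (ℝ×ℝ) → ℝ := fun z => u z - L z with hf
  have key : ∀ z ∈ segment ℝ a (a + v),
      HasFDerivWithinAt f (fderiv ℝ u z - L) (segment ℝ a (a + v)) z := fun z _ =>
    (((hd.differentiable one_ne_zero z).hasFDerivAt).sub L.hasFDerivAt).hasFDerivWithinAt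
  have hsub : segment ℝ a (a + v) ⊆ Metric.closedBall a ‖v‖ := by
    apply (convex_closedBall a ‖v‖).segment_subset
    · simp [Metric.mem_closedBall, norm_nonneg]
    · simp [Metric.mem_closedBall, dist_eq_norm]
  have bound : ∀ z ∈ segment ℝ a (a + v), ‖fderiv ℝ u z - L‖ ≤ K * ‖v‖ ^ s := by
    intro z hz
    have hz' : ‖z - a‖ ≤ ‖v‖ := by
      have := hsub hz; rwa [Metric.mem_closedBall, dist_eq_norm] at this
    calc ‖fderiv ℝ u z - L‖ ≤ K * ‖z - a‖ ^ s := hK z a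
      _ ≤ K * ‖v‖ ^ s := by
          exact mul_le_mul_of_nonneg_left (Real.rpow_le_rpow (norm_nonneg _) hz' hs0.le) hKpos
  have mv := (convex_segment a (a+v)).norm_image_sub_le_of_norm_hasFDerivWithin_le
    key bound (left_mem_segment ℝ a (a+v)) (right_mem_segment ℝ a (a+v))
  have : f (a + v) - f a = u (a + v) - u a - L v := by
    simp only [hf]; rw [show L (a+v) = L a + L v from by rw [← map_add]]; ring
  rw [this] at mv
  calc |u (a + v) - u a - L v| = ‖u (a + v) - u a - L v‖ := rfl
    _ ≤ K * ‖v‖ ^ s * ‖a + v - a‖ := mv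
    _ = K * ‖v‖ ^ s * ‖v‖ := by rw [add_sub_cancel_left]

lemma norm_pair_le' (p q : ℝ) : ‖((p,q) : ℝ×ℝ)‖ ≤ Real.sqrt (p^2+q^2) := by
  rw [Prod.norm_def]
  apply max_le
  · rw [show ‖p‖ = |p| from rfl, ← Real.sqrt_sq_eq_abs]
    exact Real.sqrt_le_sqrt (by nlinarith [sq_nonneg q])
  · rw [show ‖q‖ = |q| from rfl, ← Real.sqrt_sq_eq_abs]
    exact Real.sqrt_le_sqrt (by nlinarith [sq_nonneg p])

lemma S_bound_aux (u : (ℝ×ℝ) → ℝ) (s K : ℝ) (hs0 : 0 < s) (hKpos : 0 ≤ K)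
    (htay : ∀ a v : ℝ×ℝ, |u (a + v) - u a - fderiv ℝ u a v| ≤ K * ‖v‖ ^ s * ‖v‖)
    (a b p q : ℝ) :
    |u (a+p, b+q) + u (a+p, b-q) + u (a-p, b+q) + u (a-p, b-q) - 4 * u (a,b)|
      ≤ 4 * (K * Real.sqrt (p^2+q^2) ^ s * Real.sqrt (p^2+q^2)) := by
  set r := Real.sqrt (p^2+q^2) with hrdef
  have hr0 : 0 ≤ r := Real.sqrt_nonneg _
  set L := fderiv ℝ u (a,b) with hLdef
  have hsum : ((p,q) + (p,-q) + (-p,q) + (-p,-q) : ℝ×ℝ) = 0 := by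
    simp [Prod.ext_iff]
  have hlin : L (p,q) + L (p,-q) + L (-p,q) + L (-p,-q) = 0 := by
    rw [← map_add, ← map_add, ← map_add, hsum, map_zero]
  have T : ∀ v : ℝ×ℝ, ‖v‖ ≤ r → |u ((a,b) + v) - u (a,b) - L v| ≤ K * r ^ s * r := by
    intro v hv
    refine (htay (a,b) v).trans ?_
    have h1 : ‖v‖ ^ s ≤ r ^ s := Real.rpow_le_rpow (norm_nonneg _) hv hs0.le
    have step1 : K * ‖v‖ ^ s ≤ K * r ^ s := mul_le_mul_of_nonneg_left h1 hKpos
    exact mul_le_mul step1 hv (norm_nonneg v) (by positivity)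
  have hv1 : ‖((p,q) : ℝ×ℝ)‖ ≤ r := norm_pair_le' p q
  have hv2 : ‖((p,-q) : ℝ×ℝ)‖ ≤ r := by
    have := norm_pair_le' p (-q); simpa using this
  have hv3 : ‖((-p,q) : ℝ×ℝ)‖ ≤ r := by
    have := norm_pair_le' (-p) q; simpa using this
  have hv4 : ‖((-p,-q) : ℝ×ℝ)‖ ≤ r := by
    have := norm_pair_le' (-p) (-q); simpa using this
  have T1 := T _ hv1
  have T2 := T _ hv2
  have T3 := T _ hv3
  have T4 := T _ hv4
  have e1 : ((a,b) : ℝ×ℝ) + (p,q) = (a+p, b+q) := rfl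
  have e2 : ((a,b) : ℝ×ℝ) + (p,-q) = (a+p, b-q) := by simp [Prod.ext_iff]; ring
  have e3 : ((a,b) : ℝ×ℝ) + (-p,q) = (a-p, b+q) := by simp [Prod.ext_iff]; ring
  have e4 : ((a,b) : ℝ×ℝ) + (-p,-q) = (a-p, b-q) := by simp [Prod.ext_iff]; constructor <;> ring
  rw [e1] at T1; rw [e2] at T2; rw [e3] at T3; rw [e4] at T4
  have key : u (a+p, b+q) + u (a+p, b-q) + u (a-p, b+q) + u (a-p, b-q) - 4 * u (a,b)
      = (u (a+p, b+q) - u (a,b) - L (p,q)) + (u (a+p, b-q) - u (a,b) - L (p,-q))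
        + (u (a-p, b+q) - u (a,b) - L (-p,q)) + (u (a-p, b-q) - u (a,b) - L (-p,-q)) := by
    linarith [hlin]
  rw [key]
  have h12 := abs_add_le (u (a+p, b+q) - u (a,b) - L (p,q)) (u (a+p, b-q) - u (a,b) - L (p,-q))
  have h123 := abs_add_le ((u (a+p, b+q) - u (a,b) - L (p,q)) + (u (a+p, b-q) - u (a,b) - L (p,-q))) (u (a-p, b+q) - u (a,b) - L (-p,q))
  have h1234 := abs_add_le ((u (a+p, b+q) - u (a,b) - L (p,q)) + (u (a+p, b-q) - u (a,b) - L (p,-q)) + (u (a-p, b+q) - u (a,b) - L (-p,q))) (u (a-p, b-q) - u (a,b) - L (-p,-q))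
  linarith

lemma hasDerivAt_phi1 (γ q p : ℝ) (hne : p^2 + q^2 ≠ 0) :
    HasDerivAt (fun t : ℝ => Real.sqrt (t^2+q^2) ^ (-γ))
      ((-γ/2) * (p^2+q^2) ^ (-γ/2 - 1) * (2*p)) p := by
  have hfun : (fun t : ℝ => Real.sqrt (t^2+q^2) ^ (-γ))
      = fun t : ℝ => (t^2+q^2) ^ (-γ/2 : ℝ) := by
    funext t
    rw [Real.sqrt_eq_rpow, ← Real.rpow_mul (by positivity)]
    ring_nf
  rw [hfun]
  have hinner : HasDerivAt (fun t : ℝ => t^2+q^2) (2*p) p := by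
    have := (hasDerivAt_pow 2 p).add_const (q^2)
    simpa using this
  have houter : HasDerivAt (fun x : ℝ => x ^ (-γ/2 : ℝ))
      ((-γ/2) * (p^2+q^2) ^ (-γ/2 - 1)) (p^2+q^2) :=
    Real.hasDerivAt_rpow_const (Or.inl hne)
  have := HasDerivAt.comp p houter hinner
  simpa [Function.comp_def] using this

lemma hasDerivAt_phi2 (γ p q : ℝ) (hne : p^2 + q^2 ≠ 0) :
    HasDerivAt (fun t : ℝ => Real.sqrt (p^2+t^2) ^ (-γ))
      ((-γ/2) * (p^2+q^2) ^ (-γ/2 - 1) * (2*q)) q := by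
  have hfun : (fun t : ℝ => Real.sqrt (p^2+t^2) ^ (-γ))
      = fun t : ℝ => (p^2+t^2) ^ (-γ/2 : ℝ) := by
    funext t
    rw [Real.sqrt_eq_rpow, ← Real.rpow_mul (by positivity)]
    ring_nf
  rw [hfun]
  have hinner : HasDerivAt (fun t : ℝ => p^2+t^2) (2*q) q := by
    have := (hasDerivAt_pow 2 q).const_add (p^2)
    simpa using this
  have houter : HasDerivAt (fun x : ℝ => x ^ (-γ/2 : ℝ))
      ((-γ/2) * (p^2+q^2) ^ (-γ/2 - 1)) (p^2+q^2) :=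
    Real.hasDerivAt_rpow_const (Or.inl hne)
  have := HasDerivAt.comp q houter hinner
  simpa [Function.comp_def] using this

lemma hasDerivAt_u_c1 (u : (ℝ×ℝ) → ℝ) (hd : ContDiff ℝ 1 u) (a c p : ℝ) :
    HasDerivAt (fun t => u (a + t, c)) (fderiv ℝ u (a + p, c) (1, 0)) p := by
  have hcurve : HasDerivAt (fun t : ℝ => ((a + t, c) : ℝ×ℝ)) ((1,0) : ℝ×ℝ) p :=
    ((hasDerivAt_id p).const_add a).prodMk (hasDerivAt_const p c)
  exact (hd.differentiable one_ne_zero (a+p, c)).hasFDerivAt.comp_hasDerivAt p hcurve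

lemma hasDerivAt_u_c1_neg (u : (ℝ×ℝ) → ℝ) (hd : ContDiff ℝ 1 u) (a c p : ℝ) :
    HasDerivAt (fun t => u (a - t, c)) (fderiv ℝ u (a - p, c) (-1, 0)) p := by
  have hcurve : HasDerivAt (fun t : ℝ => ((a - t, c) : ℝ×ℝ)) ((-1,0) : ℝ×ℝ) p := by
    have h1 : HasDerivAt (fun t : ℝ => a - t) (-1) p := by
      simpa using (hasDerivAt_id p).const_sub a
    exact h1.prodMk (hasDerivAt_const p c)
  exact (hd.differentiable one_ne_zero (a-p, c)).hasFDerivAt.comp_hasDerivAt p hcurve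

lemma hasDerivAt_u_c2 (u : (ℝ×ℝ) → ℝ) (hd : ContDiff ℝ 1 u) (a c p : ℝ) :
    HasDerivAt (fun t => u (a, c + t)) (fderiv ℝ u (a, c + p) (0, 1)) p := by
  have hcurve : HasDerivAt (fun t : ℝ => ((a, c + t) : ℝ×ℝ)) ((0,1) : ℝ×ℝ) p :=
    (hasDerivAt_const p a).prodMk ((hasDerivAt_id p).const_add c)
  exact (hd.differentiable one_ne_zero (a, c+p)).hasFDerivAt.comp_hasDerivAt p hcurve

lemma hasDerivAt_u_c2_neg (u : (ℝ×ℝ) → ℝ) (hd : ContDiff ℝ 1 u) (a c p : ℝ) :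
    HasDerivAt (fun t => u (a, c - t)) (fderiv ℝ u (a, c - p) (0, -1)) p := by
  have hcurve : HasDerivAt (fun t : ℝ => ((a, c - t) : ℝ×ℝ)) ((0,-1) : ℝ×ℝ) p := by
    have h1 : HasDerivAt (fun t : ℝ => c - t) (-1) p := by
      simpa using (hasDerivAt_id p).const_sub c
    exact (hasDerivAt_const p a).prodMk h1
  exact (hd.differentiable one_ne_zero (a, c-p)).hasFDerivAt.comp_hasDerivAt p hcurve

set_option maxHeartbeats 1600000 in
/-- If `u ∈ C^{1,s}(ℝ²)` with `0 < s ≤ 1`, then for every `γ ∈ (α, 2]` and all `m + n ≤ 1`,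
`|∂_{m,n} ψ_γ(x, ξ)| ≤ C |ξ|^{s+1-γ-(m+n)}` for `ξ ∈ [0,∞)² ∖ {(0,0)}`. -/
theorem psi_first_derivative_bound
    (s α : ℝ) (hs0 : 0 < s) (hs1 : s ≤ 1) (hα0 : 0 < α) (hα2 : α < 2)
    (u : ℝ × ℝ → ℝ) (hu : CkHolder 1 s u) :
    ∃ C : ℝ, 0 < C ∧ ∀ γ : ℝ, α < γ → γ ≤ 2 → ∀ x : ℝ × ℝ, ∀ m n : ℕ, m + n ≤ 1 →
      ∀ ξ ∈ (Ici (0 : ℝ) ×ˢ Ici (0 : ℝ)) \ {((0 : ℝ), (0 : ℝ))},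
        |pd m n (fun ζ => psi2 u γ x ζ) ξ|
          ≤ C * Real.sqrt (ξ.1 ^ 2 + ξ.2 ^ 2) ^ (s + 1 - γ - ((m : ℝ) + (n : ℝ))) := by
  obtain ⟨hd, K, hKpos, hhold⟩ := hu
  have hK : ∀ x y : ℝ×ℝ, ‖fderiv ℝ u x - fderiv ℝ u y‖ ≤ K * ‖x - y‖ ^ s :=
    fun x y => (fderiv_diff_le_iFD u x y).trans (hhold x y)
  have htay := taylor_bound_aux u hd s K hs0 hKpos.le hK
  have pair : ∀ z₁ z₂ w : ℝ×ℝ,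
      |fderiv ℝ u z₁ w - fderiv ℝ u z₂ w| ≤ K * ‖z₁ - z₂‖ ^ s * ‖w‖ := by
    intro z₁ z₂ w
    have h1 : |fderiv ℝ u z₁ w - fderiv ℝ u z₂ w|
        = ‖(fderiv ℝ u z₁ - fderiv ℝ u z₂) w‖ := by
      rw [ContinuousLinearMap.sub_apply]; rfl
    rw [h1]
    calc ‖(fderiv ℝ u z₁ - fderiv ℝ u z₂) w‖
        ≤ ‖fderiv ℝ u z₁ - fderiv ℝ u z₂‖ * ‖w‖ :=
          (fderiv ℝ u z₁ - fderiv ℝ u z₂).le_opNorm w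
      _ ≤ K * ‖z₁ - z₂‖ ^ s * ‖w‖ :=
          mul_le_mul_of_nonneg_right (hK z₁ z₂) (norm_nonneg w)
  refine ⟨12 * K, by positivity, ?_⟩
  rintro γ hγα hγ2 ⟨a, b⟩ m n hmn ⟨p, q⟩ hξ
  have hγ0 : 0 < γ := hα0.trans hγα
  obtain ⟨hmem, hnotz⟩ := hξ
  have hp : 0 ≤ p := hmem.1
  have hq : 0 ≤ q := hmem.2
  have hne' : ¬(p = 0 ∧ q = 0) := by
    rintro ⟨h1, h2⟩; exact hnotz (by simp [h1, h2])
  have hpq : 0 < p^2 + q^2 := by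
    rcases lt_or_eq_of_le hp with h | h
    · positivity
    · rcases lt_or_eq_of_le hq with h2 | h2
      · positivity
      · exact absurd ⟨h.symm, h2.symm⟩ hne'
  set r := Real.sqrt (p^2 + q^2) with hrdef
  have hr : 0 < r := Real.sqrt_pos.mpr hpq
  have hr2 : r ^ 2 = p^2 + q^2 := Real.sq_sqrt hpq.le
  have hpr : p ≤ r := by nlinarith [hr.le, sq_nonneg q]
  have hqr : q ≤ r := by nlinarith [hr.le, sq_nonneg p]
  have hS := S_bound_aux u s K hs0 hKpos.le htay a b p q
  have hbase : ∀ e : ℝ, (p^2 + q^2 : ℝ) ^ (e : ℝ) = r ^ (2 * e) := by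
    intro e
    rw [← hr2, ← Real.rpow_natCast r 2, ← Real.rpow_mul hr.le]
    norm_num
  -- bound on the derivative sum in the first variable
  have hD1 : |fderiv ℝ u (a+p, b+q) ((1,0) : ℝ×ℝ) + fderiv ℝ u (a+p, b-q) ((1,0) : ℝ×ℝ)
      + fderiv ℝ u (a-p, b+q) ((-1,0) : ℝ×ℝ) + fderiv ℝ u (a-p, b-q) ((-1,0) : ℝ×ℝ)|
      ≤ 4 * (K * r ^ s) := by
    have hnegv : ((-1,0) : ℝ×ℝ) = -((1,0) : ℝ×ℝ) := by simp [Prod.ext_iff]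
    have hA3 : fderiv ℝ u (a-p, b+q) ((-1,0) : ℝ×ℝ) = -(fderiv ℝ u (a-p, b+q) ((1,0) : ℝ×ℝ)) := by
      rw [hnegv, map_neg]
    have hA4 : fderiv ℝ u (a-p, b-q) ((-1,0) : ℝ×ℝ) = -(fderiv ℝ u (a-p, b-q) ((1,0) : ℝ×ℝ)) := by
      rw [hnegv, map_neg]
    rw [hA3, hA4]
    have hd1 : ((a+p, b+q) : ℝ×ℝ) - (a-p, b+q) = (2*p, 0) := by
      simp [Prod.ext_iff]; ring
    have hd2 : ((a+p, b-q) : ℝ×ℝ) - (a-p, b-q) = (2*p, 0) := by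
      simp [Prod.ext_iff]; ring
    have hnd : ‖((2*p, 0) : ℝ×ℝ)‖ = 2*p := by
      rw [Prod.norm_def]; simp [abs_of_nonneg (by linarith : (0:ℝ) ≤ 2*p), hp]
    have hnw : ‖((1,0) : ℝ×ℝ)‖ = 1 := by
      rw [Prod.norm_def]; simp
    have h2ps : (2*p) ^ (s : ℝ) ≤ 2 * r ^ s := by
      have e1 : (2*p) ^ (s : ℝ) = (2:ℝ) ^ (s:ℝ) * p ^ (s:ℝ) := Real.mul_rpow (by norm_num) hp
      have e2 : (2:ℝ) ^ (s:ℝ) ≤ 2 := by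
        calc (2:ℝ) ^ (s:ℝ) ≤ (2:ℝ) ^ (1:ℝ) :=
              Real.rpow_le_rpow_of_exponent_le one_le_two hs1
          _ = 2 := Real.rpow_one 2
      have e3 : p ^ (s:ℝ) ≤ r ^ s := Real.rpow_le_rpow hp hpr hs0.le
      rw [e1]
      exact mul_le_mul e2 e3 (Real.rpow_nonneg hp s) (by norm_num)
    have hp1 := pair (a+p, b+q) (a-p, b+q) ((1,0) : ℝ×ℝ)
    have hp2 := pair (a+p, b-q) (a-p, b-q) ((1,0) : ℝ×ℝ)
    rw [hd1, hnd, hnw] at hp1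
    rw [hd2, hnd, hnw] at hp2
    have hb1 : |fderiv ℝ u (a+p, b+q) ((1,0) : ℝ×ℝ) - fderiv ℝ u (a-p, b+q) ((1,0) : ℝ×ℝ)|
        ≤ 2 * (K * r ^ s) := by
      calc _ ≤ K * (2*p) ^ (s:ℝ) * 1 := hp1
        _ ≤ K * (2 * r ^ s) * 1 := by
            exact mul_le_mul_of_nonneg_right (mul_le_mul_of_nonneg_left h2ps hKpos.le) (by norm_num)
        _ = 2 * (K * r ^ s) := by ring
    have hb2 : |fderiv ℝ u (a+p, b-q) ((1,0) : ℝ×ℝ) - fderiv ℝ u (a-p, b-q) ((1,0) : ℝ×ℝ)|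
        ≤ 2 * (K * r ^ s) := by
      calc _ ≤ K * (2*p) ^ (s:ℝ) * 1 := hp2
        _ ≤ K * (2 * r ^ s) * 1 := by
            exact mul_le_mul_of_nonneg_right (mul_le_mul_of_nonneg_left h2ps hKpos.le) (by norm_num)
        _ = 2 * (K * r ^ s) := by ring
    have habs := abs_add_le (fderiv ℝ u (a+p, b+q) ((1,0) : ℝ×ℝ) - fderiv ℝ u (a-p, b+q) ((1,0) : ℝ×ℝ))
      (fderiv ℝ u (a+p, b-q) ((1,0) : ℝ×ℝ) - fderiv ℝ u (a-p, b-q) ((1,0) : ℝ×ℝ))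
    have heq : fderiv ℝ u (a+p, b+q) ((1,0) : ℝ×ℝ) + fderiv ℝ u (a+p, b-q) ((1,0) : ℝ×ℝ)
        + -(fderiv ℝ u (a-p, b+q) ((1,0) : ℝ×ℝ)) + -(fderiv ℝ u (a-p, b-q) ((1,0) : ℝ×ℝ))
        = (fderiv ℝ u (a+p, b+q) ((1,0) : ℝ×ℝ) - fderiv ℝ u (a-p, b+q) ((1,0) : ℝ×ℝ))
          + (fderiv ℝ u (a+p, b-q) ((1,0) : ℝ×ℝ) - fderiv ℝ u (a-p, b-q) ((1,0) : ℝ×ℝ)) := by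
      ring
    rw [heq]
    linarith
  -- bound on the derivative sum in the second variable
  have hD2 : |fderiv ℝ u (a+p, b+q) ((0,1) : ℝ×ℝ) + fderiv ℝ u (a+p, b-q) ((0,-1) : ℝ×ℝ)
      + fderiv ℝ u (a-p, b+q) ((0,1) : ℝ×ℝ) + fderiv ℝ u (a-p, b-q) ((0,-1) : ℝ×ℝ)|
      ≤ 4 * (K * r ^ s) := by
    have hnegv : ((0,-1) : ℝ×ℝ) = -((0,1) : ℝ×ℝ) := by simp [Prod.ext_iff]
    have hA2 : fderiv ℝ u (a+p, b-q) ((0,-1) : ℝ×ℝ) = -(fderiv ℝ u (a+p, b-q) ((0,1) : ℝ×ℝ)) := by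
      rw [hnegv, map_neg]
    have hA4 : fderiv ℝ u (a-p, b-q) ((0,-1) : ℝ×ℝ) = -(fderiv ℝ u (a-p, b-q) ((0,1) : ℝ×ℝ)) := by
      rw [hnegv, map_neg]
    rw [hA2, hA4]
    have hd1 : ((a+p, b+q) : ℝ×ℝ) - (a+p, b-q) = (0, 2*q) := by
      simp [Prod.ext_iff]; ring
    have hd2 : ((a-p, b+q) : ℝ×ℝ) - (a-p, b-q) = (0, 2*q) := by
      simp [Prod.ext_iff]; ring
    have hnd : ‖((0, 2*q) : ℝ×ℝ)‖ = 2*q := by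
      rw [Prod.norm_def]; simp [abs_of_nonneg (by linarith : (0:ℝ) ≤ 2*q), hq]
    have hnw : ‖((0,1) : ℝ×ℝ)‖ = 1 := by
      rw [Prod.norm_def]; simp
    have h2qs : (2*q) ^ (s : ℝ) ≤ 2 * r ^ s := by
      have e1 : (2*q) ^ (s : ℝ) = (2:ℝ) ^ (s:ℝ) * q ^ (s:ℝ) := Real.mul_rpow (by norm_num) hq
      have e2 : (2:ℝ) ^ (s:ℝ) ≤ 2 := by
        calc (2:ℝ) ^ (s:ℝ) ≤ (2:ℝ) ^ (1:ℝ) :=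
              Real.rpow_le_rpow_of_exponent_le one_le_two hs1
          _ = 2 := Real.rpow_one 2
      have e3 : q ^ (s:ℝ) ≤ r ^ s := Real.rpow_le_rpow hq hqr hs0.le
      rw [e1]
      exact mul_le_mul e2 e3 (Real.rpow_nonneg hq s) (by norm_num)
    have hp1 := pair (a+p, b+q) (a+p, b-q) ((0,1) : ℝ×ℝ)
    have hp2 := pair (a-p, b+q) (a-p, b-q) ((0,1) : ℝ×ℝ)
    rw [hd1, hnd, hnw] at hp1
    rw [hd2, hnd, hnw] at hp2
    have hb1 : |fderiv ℝ u (a+p, b+q) ((0,1) : ℝ×ℝ) - fderiv ℝ u (a+p, b-q) ((0,1) : ℝ×ℝ)|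
        ≤ 2 * (K * r ^ s) := by
      calc _ ≤ K * (2*q) ^ (s:ℝ) * 1 := hp1
        _ ≤ K * (2 * r ^ s) * 1 := by
            exact mul_le_mul_of_nonneg_right (mul_le_mul_of_nonneg_left h2qs hKpos.le) (by norm_num)
        _ = 2 * (K * r ^ s) := by ring
    have hb2 : |fderiv ℝ u (a-p, b+q) ((0,1) : ℝ×ℝ) - fderiv ℝ u (a-p, b-q) ((0,1) : ℝ×ℝ)|
        ≤ 2 * (K * r ^ s) := by
      calc _ ≤ K * (2*q) ^ (s:ℝ) * 1 := hp2
        _ ≤ K * (2 * r ^ s) * 1 := by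
            exact mul_le_mul_of_nonneg_right (mul_le_mul_of_nonneg_left h2qs hKpos.le) (by norm_num)
        _ = 2 * (K * r ^ s) := by ring
    have habs := abs_add_le (fderiv ℝ u (a+p, b+q) ((0,1) : ℝ×ℝ) - fderiv ℝ u (a+p, b-q) ((0,1) : ℝ×ℝ))
      (fderiv ℝ u (a-p, b+q) ((0,1) : ℝ×ℝ) - fderiv ℝ u (a-p, b-q) ((0,1) : ℝ×ℝ))
    have heq : fderiv ℝ u (a+p, b+q) ((0,1) : ℝ×ℝ) + -(fderiv ℝ u (a+p, b-q) ((0,1) : ℝ×ℝ))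
        + fderiv ℝ u (a-p, b+q) ((0,1) : ℝ×ℝ) + -(fderiv ℝ u (a-p, b-q) ((0,1) : ℝ×ℝ))
        = (fderiv ℝ u (a+p, b+q) ((0,1) : ℝ×ℝ) - fderiv ℝ u (a+p, b-q) ((0,1) : ℝ×ℝ))
          + (fderiv ℝ u (a-p, b+q) ((0,1) : ℝ×ℝ) - fderiv ℝ u (a-p, b-q) ((0,1) : ℝ×ℝ)) := by
      ring
    rw [heq]
    linarith
  have hcases : (m = 0 ∧ n = 0) ∨ (m = 1 ∧ n = 0) ∨ (m = 0 ∧ n = 1) := by omega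
  rcases hcases with ⟨hm, hn⟩ | ⟨hm, hn⟩ | ⟨hm, hn⟩ <;> subst hm <;> subst hn
  · -- case m = n = 0
    have hpd : pd 0 0 (fun ζ => psi2 u γ (a,b) ζ) (p,q) = psi2 u γ (a,b) (p,q) := by
      simp [pd]
    rw [hpd]
    have hval : psi2 u γ (a,b) (p,q)
        = r ^ (-γ) * (u (a+p, b+q) + u (a+p, b-q) + u (a-p, b+q) + u (a-p, b-q) - 4 * u (a,b)) :=
      rfl
    rw [hval, abs_mul, abs_of_nonneg (Real.rpow_nonneg hr.le _)]
    have hexp : s + 1 - γ - (((0:ℕ) : ℝ) + ((0:ℕ) : ℝ)) = -γ + (s + 1) := by push_cast; ring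
    rw [hexp]
    have hident : r ^ (-γ + (s+1)) = r ^ (-γ) * (r ^ s * r) := by
      rw [Real.rpow_add hr, Real.rpow_add hr, Real.rpow_one]
    calc r ^ (-γ) * |u (a+p, b+q) + u (a+p, b-q) + u (a-p, b+q) + u (a-p, b-q) - 4 * u (a,b)|
        ≤ r ^ (-γ) * (4 * (K * r ^ s * r)) :=
          mul_le_mul_of_nonneg_left hS (Real.rpow_nonneg hr.le _)
      _ = 4 * K * (r ^ (-γ) * (r ^ s * r)) := by ring
      _ = 4 * K * r ^ (-γ + (s+1)) := by rw [hident]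
      _ ≤ 12 * K * r ^ (-γ + (s+1)) := by
          have h0 : (0:ℝ) ≤ K * r ^ (-γ + (s+1)) := by positivity
          linarith
  · -- case m = 1, n = 0
    have hpd : pd 1 0 (fun ζ => psi2 u γ (a,b) ζ) (p,q)
        = deriv (fun t => psi2 u γ (a,b) (t, q)) p := by
      simp [pd]
    rw [hpd]
    set A1 := fderiv ℝ u (a+p, b+q) ((1,0) : ℝ×ℝ) with hA1
    set A2 := fderiv ℝ u (a+p, b-q) ((1,0) : ℝ×ℝ) with hA2
    set A3 := fderiv ℝ u (a-p, b+q) ((-1,0) : ℝ×ℝ) with hA3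
    set A4 := fderiv ℝ u (a-p, b-q) ((-1,0) : ℝ×ℝ) with hA4
    have hφ := hasDerivAt_phi1 γ q p (ne_of_gt hpq)
    have h1 := hasDerivAt_u_c1 u hd a (b+q) p
    have h2 := hasDerivAt_u_c1 u hd a (b-q) p
    have h3 := hasDerivAt_u_c1_neg u hd a (b+q) p
    have h4 := hasDerivAt_u_c1_neg u hd a (b-q) p
    have hSd : HasDerivAt (fun t => u (a+t, b+q) + u (a+t, b-q) + u (a-t, b+q) + u (a-t, b-q)
        - 4 * u (a,b)) (A1 + A2 + A3 + A4) p := (((h1.add h2).add h3).add h4).sub_const _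
    have hprod : HasDerivAt (fun t : ℝ => psi2 u γ (a,b) (t, q))
        ((-γ/2) * (p^2+q^2) ^ (-γ/2 - 1) * (2*p)
          * (u (a+p, b+q) + u (a+p, b-q) + u (a-p, b+q) + u (a-p, b-q) - 4 * u (a,b))
        + Real.sqrt (p^2+q^2) ^ (-γ) * (A1 + A2 + A3 + A4)) p := hφ.mul hSd
    rw [hprod.deriv]
    have hexp : s + 1 - γ - (((1:ℕ) : ℝ) + ((0:ℕ) : ℝ)) = s - γ := by push_cast; ring
    rw [hexp]
    -- bound the first term
    have hφ'abs : |(-γ/2) * (p^2+q^2) ^ (-γ/2 - 1) * (2*p)| = γ * r ^ (-γ - 2) * p := by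
      rw [hbase (-γ/2 - 1)]
      rw [abs_mul, abs_mul]
      rw [abs_of_nonneg (Real.rpow_nonneg hr.le _), abs_of_nonpos (by linarith : -γ/2 ≤ 0),
        abs_of_nonneg (by linarith : (0:ℝ) ≤ 2*p)]
      have : 2 * (-γ/2 - 1) = -γ - 2 := by ring
      rw [this]; ring
    have hterm1 : |(-γ/2) * (p^2+q^2) ^ (-γ/2 - 1) * (2*p)
          * (u (a+p, b+q) + u (a+p, b-q) + u (a-p, b+q) + u (a-p, b-q) - 4 * u (a,b))|
        ≤ 8 * K * r ^ (s - γ) := by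
      rw [abs_mul, hφ'abs]
      have hstep : γ * r ^ (-γ-2) * p
          * |u (a+p, b+q) + u (a+p, b-q) + u (a-p, b+q) + u (a-p, b-q) - 4 * u (a,b)|
          ≤ γ * r ^ (-γ-2) * r * (4 * (K * r ^ s * r)) := by
        have hx1 : γ * r ^ (-γ-2) * p ≤ γ * r ^ (-γ-2) * r := by
          have : (0:ℝ) ≤ γ * r ^ (-γ-2) := by positivity
          exact mul_le_mul_of_nonneg_left hpr this
        exact mul_le_mul hx1 hS (abs_nonneg _) (by positivity)
      have hident : γ * r ^ (-γ-2) * r * (4 * (K * r ^ s * r)) = 4 * γ * K * r ^ (s - γ) := by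
        rw [show (s - γ : ℝ) = (-γ-2) + 1 + (s + 1) by ring,
          Real.rpow_add hr, Real.rpow_add hr, Real.rpow_add hr, Real.rpow_one]
        ring
      rw [hident] at hstep
      have hfin : 4 * γ * K * r ^ (s - γ) ≤ 8 * K * r ^ (s - γ) := by
        have h0 : (0:ℝ) ≤ K * r ^ (s - γ) := by positivity
        have h1 : 4 * γ * (K * r ^ (s - γ)) ≤ 4 * 2 * (K * r ^ (s - γ)) :=
          mul_le_mul_of_nonneg_right (by linarith) h0
        linarith
      linarith
    -- bound the second term
    have hterm2 : |Real.sqrt (p^2+q^2) ^ (-γ) * (A1 + A2 + A3 + A4)| ≤ 4 * K * r ^ (s - γ) := by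
      rw [abs_mul, abs_of_nonneg (Real.rpow_nonneg hr.le _)]
      have : r ^ (-γ) * |A1 + A2 + A3 + A4| ≤ r ^ (-γ) * (4 * (K * r ^ s)) :=
        mul_le_mul_of_nonneg_left hD1 (Real.rpow_nonneg hr.le _)
      have hident : r ^ (-γ) * (4 * (K * r ^ s)) = 4 * K * r ^ (s - γ) := by
        rw [show (s - γ : ℝ) = -γ + s by ring, Real.rpow_add hr]
        ring
      rw [hident] at this
      exact this
    calc |(-γ/2) * (p^2+q^2) ^ (-γ/2 - 1) * (2*p)
          * (u (a+p, b+q) + u (a+p, b-q) + u (a-p, b+q) + u (a-p, b-q) - 4 * u (a,b))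
        + Real.sqrt (p^2+q^2) ^ (-γ) * (A1 + A2 + A3 + A4)|
        ≤ |(-γ/2) * (p^2+q^2) ^ (-γ/2 - 1) * (2*p)
          * (u (a+p, b+q) + u (a+p, b-q) + u (a-p, b+q) + u (a-p, b-q) - 4 * u (a,b))|
        + |Real.sqrt (p^2+q^2) ^ (-γ) * (A1 + A2 + A3 + A4)| := abs_add_le _ _
      _ ≤ 8 * K * r ^ (s - γ) + 4 * K * r ^ (s - γ) := add_le_add hterm1 hterm2
      _ = 12 * K * r ^ (s - γ) := by ring
  · -- case m = 0, n = 1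
    have hpd : pd 0 1 (fun ζ => psi2 u γ (a,b) ζ) (p,q)
        = deriv (fun t => psi2 u γ (a,b) (p, t)) q := by
      simp [pd]
    rw [hpd]
    set A1 := fderiv ℝ u (a+p, b+q) ((0,1) : ℝ×ℝ) with hA1
    set A2 := fderiv ℝ u (a+p, b-q) ((0,-1) : ℝ×ℝ) with hA2
    set A3 := fderiv ℝ u (a-p, b+q) ((0,1) : ℝ×ℝ) with hA3
    set A4 := fderiv ℝ u (a-p, b-q) ((0,-1) : ℝ×ℝ) with hA4
    have hφ := hasDerivAt_phi2 γ p q (ne_of_gt hpq)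
    have h1 := hasDerivAt_u_c2 u hd (a+p) b q
    have h2 := hasDerivAt_u_c2_neg u hd (a+p) b q
    have h3 := hasDerivAt_u_c2 u hd (a-p) b q
    have h4 := hasDerivAt_u_c2_neg u hd (a-p) b q
    have hSd : HasDerivAt (fun t => u (a+p, b+t) + u (a+p, b-t) + u (a-p, b+t) + u (a-p, b-t)
        - 4 * u (a,b)) (A1 + A2 + A3 + A4) q := (((h1.add h2).add h3).add h4).sub_const _
    have hprod : HasDerivAt (fun t : ℝ => psi2 u γ (a,b) (p, t))
        ((-γ/2) * (p^2+q^2) ^ (-γ/2 - 1) * (2*q)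
          * (u (a+p, b+q) + u (a+p, b-q) + u (a-p, b+q) + u (a-p, b-q) - 4 * u (a,b))
        + Real.sqrt (p^2+q^2) ^ (-γ) * (A1 + A2 + A3 + A4)) q := hφ.mul hSd
    rw [hprod.deriv]
    have hexp : s + 1 - γ - (((0:ℕ) : ℝ) + ((1:ℕ) : ℝ)) = s - γ := by push_cast; ring
    rw [hexp]
    have hφ'abs : |(-γ/2) * (p^2+q^2) ^ (-γ/2 - 1) * (2*q)| = γ * r ^ (-γ - 2) * q := by
      rw [hbase (-γ/2 - 1)]
      rw [abs_mul, abs_mul]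
      rw [abs_of_nonneg (Real.rpow_nonneg hr.le _), abs_of_nonpos (by linarith : -γ/2 ≤ 0),
        abs_of_nonneg (by linarith : (0:ℝ) ≤ 2*q)]
      have : 2 * (-γ/2 - 1) = -γ - 2 := by ring
      rw [this]; ring
    have hterm1 : |(-γ/2) * (p^2+q^2) ^ (-γ/2 - 1) * (2*q)
          * (u (a+p, b+q) + u (a+p, b-q) + u (a-p, b+q) + u (a-p, b-q) - 4 * u (a,b))|
        ≤ 8 * K * r ^ (s - γ) := by
      rw [abs_mul, hφ'abs]
      have hstep : γ * r ^ (-γ-2) * q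
          * |u (a+p, b+q) + u (a+p, b-q) + u (a-p, b+q) + u (a-p, b-q) - 4 * u (a,b)|
          ≤ γ * r ^ (-γ-2) * r * (4 * (K * r ^ s * r)) := by
        have hx1 : γ * r ^ (-γ-2) * q ≤ γ * r ^ (-γ-2) * r := by
          have : (0:ℝ) ≤ γ * r ^ (-γ-2) := by positivity
          exact mul_le_mul_of_nonneg_left hqr this
        exact mul_le_mul hx1 hS (abs_nonneg _) (by positivity)
      have hident : γ * r ^ (-γ-2) * r * (4 * (K * r ^ s * r)) = 4 * γ * K * r ^ (s - γ) := by
        rw [show (s - γ : ℝ) = (-γ-2) + 1 + (s + 1) by ring,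
          Real.rpow_add hr, Real.rpow_add hr, Real.rpow_add hr, Real.rpow_one]
        ring
      rw [hident] at hstep
      have hfin : 4 * γ * K * r ^ (s - γ) ≤ 8 * K * r ^ (s - γ) := by
        have h0 : (0:ℝ) ≤ K * r ^ (s - γ) := by positivity
        have h1 : 4 * γ * (K * r ^ (s - γ)) ≤ 4 * 2 * (K * r ^ (s - γ)) :=
          mul_le_mul_of_nonneg_right (by linarith) h0
        linarith
      linarith
    have hterm2 : |Real.sqrt (p^2+q^2) ^ (-γ) * (A1 + A2 + A3 + A4)| ≤ 4 * K * r ^ (s - γ) := by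
      rw [abs_mul, abs_of_nonneg (Real.rpow_nonneg hr.le _)]
      have : r ^ (-γ) * |A1 + A2 + A3 + A4| ≤ r ^ (-γ) * (4 * (K * r ^ s)) :=
        mul_le_mul_of_nonneg_left hD2 (Real.rpow_nonneg hr.le _)
      have hident : r ^ (-γ) * (4 * (K * r ^ s)) = 4 * K * r ^ (s - γ) := by
        rw [show (s - γ : ℝ) = -γ + s by ring, Real.rpow_add hr]
        ring
      rw [hident] at this
      exact this
    calc |(-γ/2) * (p^2+q^2) ^ (-γ/2 - 1) * (2*q)
          * (u (a+p, b+q) + u (a+p, b-q) + u (a-p, b+q) + u (a-p, b-q) - 4 * u (a,b))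
        + Real.sqrt (p^2+q^2) ^ (-γ) * (A1 + A2 + A3 + A4)|
        ≤ |(-γ/2) * (p^2+q^2) ^ (-γ/2 - 1) * (2*q)
          * (u (a+p, b+q) + u (a+p, b-q) + u (a-p, b+q) + u (a-p, b-q) - 4 * u (a,b))|
        + |Real.sqrt (p^2+q^2) ^ (-γ) * (A1 + A2 + A3 + A4)| := abs_add_le _ _
      _ ≤ 8 * K * r ^ (s - γ) + 4 * K * r ^ (s - γ) := add_le_add hterm1 hterm2
      _ = 12 * K * r ^ (s - γ) := by ring
end

section
/- Let L > 0 and p > 0 with p ≠ 2. Then there exists a constant C > 0, depending only on p and L, such that for every integer N ≥ 1 and h = L/N, ∫_{([0,L]×[0,L]) ∖ ([0,h]×[0,h])} (ξ²+η²)^{−p/2} dξ dη ≤ C h^{min{0, 2−p}}; equivalently, Σ_{0≤i,j≤N−1, (i,j)≠(0,0)} ∫_{jh}^{(j+1)h} ∫_{ih}^{(i+1)h} (ξ²+η²)^{−p/2} dξ dη ≤ C h^{min{0, 2−p}}. -/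
open MeasureTheory Set

lemma sq_rpow_neg {ξ q : ℝ} (hξ : 0 < ξ) : ((ξ ^ 2 : ℝ)) ^ (-q / 2) = ξ ^ (-q) := by
  rw [← Real.rpow_natCast ξ 2, ← Real.rpow_mul hξ.le]
  norm_num
  rw [show (2:ℝ) * (-q / 2) = -q by ring]

lemma inner_bound (p : ℝ) (hp : 2 < p) (L ξ : ℝ) (hξ : 0 < ξ) :
    ∫ η in Icc (0:ℝ) L, ((ξ ^ 2 + η ^ 2 : ℝ) ^ (-p / 2)) ≤ 2 * ξ ^ (1 - p) := by
  have hnegp : -p < -1 := by linarith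
  have hnn : ∀ η : ℝ, 0 ≤ (ξ ^ 2 + η ^ 2 : ℝ) ^ (-p / 2) := fun η =>
    Real.rpow_nonneg (by positivity) _
  have hint1 : IntegrableOn (fun η : ℝ => (ξ ^ 2 + η ^ 2 : ℝ) ^ (-p / 2)) (Icc 0 ξ) := by
    apply ContinuousOn.integrableOn_compact isCompact_Icc
    exact (((continuous_const.add (continuous_pow 2)).continuousOn).rpow_const
      (fun x _ => Or.inl (by positivity : (0:ℝ) < ξ ^ 2 + x ^ 2).ne'))
  have hgint : IntegrableOn (fun η : ℝ => η ^ (-p)) (Ioi ξ) :=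
    integrableOn_Ioi_rpow_of_lt hnegp hξ
  have hfint : IntegrableOn (fun η : ℝ => (ξ ^ 2 + η ^ 2 : ℝ) ^ (-p / 2)) (Ioi ξ) := by
    apply Integrable.mono' hgint
    · exact (Measurable.aestronglyMeasurable (by fun_prop))
    · refine (ae_restrict_iff' measurableSet_Ioi).2 (ae_of_all _ fun η hη => ?_)
      have hη' : 0 < η := hξ.trans hη
      rw [Real.norm_of_nonneg (hnn η), ← sq_rpow_neg hη']
      exact Real.rpow_le_rpow_of_nonpos (by positivity) (by nlinarith) (by linarith)
  have I1 : ∫ η in Icc (0:ℝ) ξ, ((ξ ^ 2 + η ^ 2 : ℝ) ^ (-p / 2)) ≤ ξ ^ (1 - p) := by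
    have hb : ∀ η ∈ Icc (0:ℝ) ξ, ‖(ξ ^ 2 + η ^ 2 : ℝ) ^ (-p / 2)‖ ≤ ξ ^ (-p) := by
      intro η _
      rw [Real.norm_of_nonneg (hnn η), ← sq_rpow_neg hξ]
      exact Real.rpow_le_rpow_of_nonpos (by positivity) (by nlinarith) (by linarith)
    calc ∫ η in Icc (0:ℝ) ξ, ((ξ ^ 2 + η ^ 2 : ℝ) ^ (-p / 2))
        ≤ ‖∫ η in Icc (0:ℝ) ξ, ((ξ ^ 2 + η ^ 2 : ℝ) ^ (-p / 2))‖ := le_abs_self _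
      _ ≤ ξ ^ (-p) * (volume (Icc (0:ℝ) ξ)).toReal :=
          norm_setIntegral_le_of_norm_le_const measure_Icc_lt_top hb
      _ = ξ ^ (1 - p) := by
          rw [Real.volume_Icc, sub_zero, ENNReal.toReal_ofReal hξ.le,
            show (1:ℝ) - p = -p + 1 by ring, Real.rpow_add_one hξ.ne']
  have I2 : ∫ η in Ioi ξ, ((ξ ^ 2 + η ^ 2 : ℝ) ^ (-p / 2)) ≤ ξ ^ (1 - p) := by
    have hmono : ∫ η in Ioi ξ, ((ξ ^ 2 + η ^ 2 : ℝ) ^ (-p / 2)) ≤ ∫ η in Ioi ξ, η ^ (-p) := by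
      apply setIntegral_mono_on hfint hgint measurableSet_Ioi
      intro η hη
      have hη' : 0 < η := hξ.trans hη
      rw [← sq_rpow_neg hη']
      exact Real.rpow_le_rpow_of_nonpos (by positivity) (by nlinarith) (by linarith)
    rw [integral_Ioi_rpow_of_lt hnegp hξ] at hmono
    refine hmono.trans ?_
    rw [show (-p) + 1 = 1 - p by ring, show -ξ ^ (1-p) / (1 - p) = ξ ^ (1-p) / (p - 1) by
      rw [show (1:ℝ) - p = -(p - 1) by ring, div_neg, neg_div, neg_neg]]
    exact div_le_self (Real.rpow_nonneg hξ.le _) (by linarith)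
  have hsub : Icc (0:ℝ) L ⊆ Icc 0 ξ ∪ Ioi ξ := by
    intro η hη
    rcases le_or_gt η ξ with hc | hc
    · exact Or.inl ⟨hη.1, hc⟩
    · exact Or.inr hc
  have hdisj : Disjoint (Icc (0:ℝ) ξ) (Ioi ξ) :=
    Set.disjoint_left.2 fun η h1 h2 => absurd h1.2 (not_le.2 h2)
  calc ∫ η in Icc (0:ℝ) L, ((ξ ^ 2 + η ^ 2 : ℝ) ^ (-p / 2))
      ≤ ∫ η in Icc (0:ℝ) ξ ∪ Ioi ξ, ((ξ ^ 2 + η ^ 2 : ℝ) ^ (-p / 2)) :=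
        setIntegral_mono_set (hint1.union hfint) (ae_of_all _ hnn)
          (HasSubset.Subset.eventuallyLE hsub)
    _ = (∫ η in Icc (0:ℝ) ξ, ((ξ ^ 2 + η ^ 2 : ℝ) ^ (-p / 2)))
        + ∫ η in Ioi ξ, ((ξ ^ 2 + η ^ 2 : ℝ) ^ (-p / 2)) :=
        setIntegral_union hdisj measurableSet_Ioi hint1 hfint
    _ ≤ ξ ^ (1 - p) + ξ ^ (1 - p) := add_le_add I1 I2
    _ = 2 * ξ ^ (1 - p) := by ring

lemma rect_bound (p : ℝ) (hp : 2 < p) (L h : ℝ) (hh : 0 < h) :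
    ∫ x in Icc h L ×ˢ Icc (0:ℝ) L, ((x.1 ^ 2 + x.2 ^ 2 : ℝ) ^ (-p / 2))
      ≤ 2 / (p - 2) * h ^ (2 - p) := by
  have hint : IntegrableOn (fun x : ℝ × ℝ => (x.1 ^ 2 + x.2 ^ 2 : ℝ) ^ (-p / 2))
      (Icc h L ×ˢ Icc (0:ℝ) L) := by
    apply ContinuousOn.integrableOn_compact (isCompact_Icc.prod isCompact_Icc)
    refine ContinuousOn.rpow_const (by fun_prop) fun x hx => Or.inl ?_
    have h1 : 0 < x.1 := hh.trans_le hx.1.1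
    positivity
  rw [Measure.volume_eq_prod] at hint ⊢
  rw [setIntegral_prod _ hint]
  have hint2 : IntegrableOn (fun ξ : ℝ => 2 * ξ ^ (1 - p)) (Icc h L) := by
    apply Integrable.const_mul
    apply ContinuousOn.integrableOn_compact isCompact_Icc
    exact ContinuousOn.rpow_const continuousOn_id
      (fun x hx => Or.inl (hh.trans_le hx.1).ne')
  have houter : IntegrableOn
      (fun ξ : ℝ => ∫ η in Icc (0:ℝ) L, ((ξ ^ 2 + η ^ 2 : ℝ) ^ (-p / 2))) (Icc h L) := by
    rw [IntegrableOn, ← Measure.prod_restrict] at hint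
    exact hint.integral_prod_left
  have step1 : ∫ ξ in Icc h L, (∫ η in Icc (0:ℝ) L, ((ξ ^ 2 + η ^ 2 : ℝ) ^ (-p / 2)))
      ≤ ∫ ξ in Icc h L, 2 * ξ ^ (1 - p) := by
    apply setIntegral_mono_on houter hint2 measurableSet_Icc
    intro ξ hξ
    exact inner_bound p hp L ξ (hh.trans_le hξ.1)
  refine step1.trans ?_
  have hgint : IntegrableOn (fun ξ : ℝ => ξ ^ (1 - p)) (Ioi h) :=
    integrableOn_Ioi_rpow_of_lt (by linarith) hh
  have step2 : ∫ ξ in Icc h L, ξ ^ (1 - p) ≤ ∫ ξ in Ioi h, ξ ^ (1 - p) := by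
    apply setIntegral_mono_set hgint
    · exact (ae_restrict_iff' measurableSet_Ioi).2 (ae_of_all _ fun ξ hξ =>
        Real.rpow_nonneg (hh.trans hξ).le _)
    · rw [ae_le_set]
      refine measure_mono_null (t := {h}) (fun ξ hξ => ?_) Real.volume_singleton
      exact le_antisymm (not_lt.1 hξ.2) hξ.1.1
  calc ∫ ξ in Icc h L, 2 * ξ ^ (1 - p)
      = 2 * ∫ ξ in Icc h L, ξ ^ (1 - p) := integral_const_mul 2 _
    _ ≤ 2 * ∫ ξ in Ioi h, ξ ^ (1 - p) := by linarith
    _ = 2 / (p - 2) * h ^ (2 - p) := by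
        rw [integral_Ioi_rpow_of_lt (by linarith) hh,
          show (1:ℝ) - p + 1 = 2 - p by ring,
          show -h ^ (2 - p) / (2 - p) = h ^ (2 - p) / (p - 2) by
            rw [show (2:ℝ) - p = -(p - 2) by ring, div_neg, neg_div, neg_neg]]
        ring


/-- For `L > 0` and `p > 0`, `p ≠ 2`, the integral of `(ξ²+η²)^{-p/2}` over the square
`[0,L]²` with the corner square `[0,h]²` removed (`h = L/N`) is bounded by
`C h^{min{0, 2-p}}`, with `C` depending only on `p` and `L`. -/
theorem annular_grid_integral_bound (L p : ℝ) (hL : 0 < L) (hp : 0 < p) (hp2 : p ≠ 2) :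
    ∃ C : ℝ, 0 < C ∧ ∀ N : ℕ, 1 ≤ N →
      (∫ ξ in (Icc (0 : ℝ) L ×ˢ Icc (0 : ℝ) L) \ (Icc (0 : ℝ) (L / N) ×ˢ Icc (0 : ℝ) (L / N)),
          (ξ.1 ^ 2 + ξ.2 ^ 2) ^ (-p / 2))
        ≤ C * (L / N) ^ (min 0 (2 - p)) := by
  have hnn : ∀ z : ℝ × ℝ, 0 ≤ (z.1 ^ 2 + z.2 ^ 2 : ℝ) ^ (-p / 2) := fun z =>
    Real.rpow_nonneg (by positivity) _
  rcases lt_or_gt_of_ne hp2 with hplt | hpgt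
  · -- case p < 2
    refine ⟨(L ^ (1 - p / 2) / (1 - p / 2)) ^ 2,
      pow_pos (div_pos (Real.rpow_pos_of_pos hL _) (by linarith)) 2, fun N hN => ?_⟩
    rw [min_eq_left (by linarith), Real.rpow_zero, mul_one]
    set D := (Icc (0 : ℝ) L ×ˢ Icc (0 : ℝ) L) \ (Icc (0 : ℝ) (L / N) ×ˢ Icc (0 : ℝ) (L / N))
      with hD
    set SQ := Icc (0 : ℝ) L ×ˢ Icc (0 : ℝ) L with hSQ
    have hDsub : D ⊆ SQ := diff_subset
    have hDmeas : MeasurableSet D :=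
      ((measurableSet_Icc.prod measurableSet_Icc).diff
        (measurableSet_Icc.prod measurableSet_Icc))
    -- 1D integrability and value
    have h1d_int : IntegrableOn (fun t : ℝ => t ^ (-p / 2)) (Icc 0 L) := by
      have := (intervalIntegral.intervalIntegrable_rpow' (a := 0) (b := L)
        (show (-1:ℝ) < -p / 2 by linarith))
      rw [intervalIntegrable_iff_integrableOn_Ioc_of_le hL.le] at this
      exact this.congr_set_ae Ioc_ae_eq_Icc.symm
    have h1d_val : ∫ t in Icc (0:ℝ) L, t ^ (-p / 2) = L ^ (1 - p / 2) / (1 - p / 2) := by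
      rw [integral_Icc_eq_integral_Ioc, ← intervalIntegral.integral_of_le hL.le,
        integral_rpow (Or.inl (by linarith : (-1:ℝ) < -p / 2)),
        Real.zero_rpow (by intro hc; linarith : -p / 2 + 1 ≠ 0),
        show -p / 2 + 1 = 1 - p / 2 by ring, sub_zero]
    -- g integrable on sq
    have hg_int : IntegrableOn (fun z : ℝ × ℝ => z.1 ^ (-p / 2) * z.2 ^ (-p / 2)) SQ := by
      rw [IntegrableOn, Measure.volume_eq_prod, ← Measure.prod_restrict]
      exact h1d_int.mul_prod h1d_int
    -- a.e. pointwise bound on D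
    have hnull : volume {z : ℝ × ℝ | z.1 = 0 ∨ z.2 = 0} = 0 := by
      have : {z : ℝ × ℝ | z.1 = 0 ∨ z.2 = 0}
          = ({(0:ℝ)} ×ˢ (univ : Set ℝ)) ∪ ((univ : Set ℝ) ×ˢ {(0:ℝ)}) := by
        ext z
        simp only [mem_setOf_eq, mem_union, mem_prod, mem_singleton_iff, mem_univ,
          and_true, true_and]
      rw [this]
      apply measure_union_null <;>
        · rw [Measure.volume_eq_prod, Measure.prod_prod]; simp
    have h0 : ∀ᵐ z : ℝ × ℝ, z.1 ≠ 0 ∧ z.2 ≠ 0 := by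
      rw [ae_iff]
      simpa only [not_and_or, Classical.not_not] using hnull
    have key : ∀ᵐ z : ℝ × ℝ ∂volume.restrict D,
        ‖(z.1 ^ 2 + z.2 ^ 2 : ℝ) ^ (-p / 2)‖ ≤ z.1 ^ (-p / 2) * z.2 ^ (-p / 2) := by
      filter_upwards [ae_restrict_mem hDmeas, ae_restrict_of_ae h0] with z hz h0z
      have hz1 : 0 < z.1 := lt_of_le_of_ne hz.1.1.1 (Ne.symm h0z.1)
      have hz2 : 0 < z.2 := lt_of_le_of_ne hz.1.2.1 (Ne.symm h0z.2)
      rw [Real.norm_of_nonneg (hnn z), ← Real.mul_rpow hz1.le hz2.le]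
      exact Real.rpow_le_rpow_of_nonpos (by positivity) (by nlinarith) (by linarith)
    have hf_int : IntegrableOn (fun z : ℝ × ℝ => (z.1 ^ 2 + z.2 ^ 2 : ℝ) ^ (-p / 2)) D :=
      Integrable.mono' (hg_int.mono_set hDsub)
        (Measurable.aestronglyMeasurable (by fun_prop)).restrict key
    calc ∫ z in D, ((z.1 ^ 2 + z.2 ^ 2 : ℝ) ^ (-p / 2))
        ≤ ∫ z in D, z.1 ^ (-p / 2) * z.2 ^ (-p / 2) := by
          apply integral_mono_ae hf_int (hg_int.mono_set hDsub)
          filter_upwards [key] with z hz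
          exact (le_abs_self _).trans (le_of_eq (Real.norm_eq_abs _).symm |>.trans hz)
      _ ≤ ∫ z in SQ, z.1 ^ (-p / 2) * z.2 ^ (-p / 2) := by
          apply setIntegral_mono_set hg_int
          · refine (ae_restrict_iff' (measurableSet_Icc.prod measurableSet_Icc)).2
              (ae_of_all _ fun z hz => ?_)
            exact mul_nonneg (Real.rpow_nonneg hz.1.1 _) (Real.rpow_nonneg hz.2.1 _)
          · exact HasSubset.Subset.eventuallyLE hDsub
      _ = (L ^ (1 - p / 2) / (1 - p / 2)) ^ 2 := by
          rw [hSQ, Measure.volume_eq_prod,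
            setIntegral_prod_mul (fun t : ℝ => t ^ (-p / 2)) (fun t : ℝ => t ^ (-p / 2)),
            h1d_val]
          ring
  · -- case p > 2
    refine ⟨4 / (p - 2), div_pos (by norm_num) (by linarith), fun N hN => ?_⟩
    have hN' : (0:ℝ) < N := by exact_mod_cast Nat.pos_of_ne_zero (by omega)
    set h := L / N with hdef
    have hh : 0 < h := div_pos hL hN'
    have hhL : h ≤ L := div_le_self hL.le (by exact_mod_cast hN)
    rw [min_eq_right (by linarith)]
    set f : ℝ × ℝ → ℝ := fun z => (z.1 ^ 2 + z.2 ^ 2 : ℝ) ^ (-p / 2) with hf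
    set D := (Icc (0 : ℝ) L ×ˢ Icc (0 : ℝ) L) \ (Icc (0 : ℝ) h ×ˢ Icc (0 : ℝ) h) with hD
    set A := Icc h L ×ˢ Icc (0:ℝ) L with hA
    set B := Ico (0:ℝ) h ×ˢ Icc h L with hB
    set B' := Icc (0:ℝ) L ×ˢ Icc h L with hB'
    have hcont : ∀ (s : Set (ℝ × ℝ)), (∀ x ∈ s, x.1 ^ 2 + x.2 ^ 2 ≠ 0) → IsCompact s →
        IntegrableOn f s := fun s hs hsc =>
      (ContinuousOn.rpow_const (by fun_prop) fun x hx => Or.inl (hs x hx)).integrableOn_compact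
        hsc
    have hA_int : IntegrableOn f A := by
      refine hcont A (fun x hx => ?_) (isCompact_Icc.prod isCompact_Icc)
      have := hh.trans_le hx.1.1; positivity
    have hB'_int : IntegrableOn f B' := by
      refine hcont B' (fun x hx => ?_) (isCompact_Icc.prod isCompact_Icc)
      have := hh.trans_le hx.2.1; positivity
    have hB_int : IntegrableOn f B :=
      hB'_int.mono_set (prod_mono (Ico_subset_Icc_self.trans (Icc_subset_Icc le_rfl hhL))
        (subset_refl _))
    have hD_sub : D ⊆ A ∪ B := by
      rintro z ⟨⟨hz1, hz2⟩, hz3⟩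
      rcases le_or_gt h z.1 with hc | hc
      · exact Or.inl ⟨⟨hc, hz1.2⟩, hz2⟩
      · refine Or.inr ⟨⟨hz1.1, hc⟩, ?_, hz2.2⟩
        by_contra hcon
        exact hz3 ⟨⟨hz1.1, hc.le⟩, hz2.1, (not_le.1 hcon).le⟩
    have hdisj : Disjoint A B := by
      rw [Set.disjoint_left]
      rintro z ⟨hz1, _⟩ ⟨hz1', _⟩
      exact absurd hz1.1 (not_le.2 hz1'.2)
    have hBB' : ∫ z in B, f z ≤ ∫ z in B', f z := by
      apply setIntegral_mono_set hB'_int (ae_of_all _ fun z => hnn z)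
      exact HasSubset.Subset.eventuallyLE (prod_mono
        (Ico_subset_Icc_self.trans (Icc_subset_Icc le_rfl hhL)) (subset_refl _))
    have hswap : ∫ z in B', f z = ∫ z in A, f z := by
      rw [hB', hA, Measure.volume_eq_prod, ← Measure.prod_restrict, ← Measure.prod_restrict,
        ← integral_prod_swap f]
      refine integral_congr_ae (ae_of_all _ fun z => ?_)
      show f z.swap = f z
      simp only [hf, Prod.fst_swap, Prod.snd_swap]
      rw [add_comm]
    calc ∫ z in D, f z
        ≤ ∫ z in A ∪ B, f z :=
          setIntegral_mono_set (hA_int.union hB_int) (ae_of_all _ fun z => hnn z)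
            (HasSubset.Subset.eventuallyLE hD_sub)
      _ = (∫ z in A, f z) + ∫ z in B, f z :=
          setIntegral_union hdisj (measurableSet_Ico.prod measurableSet_Icc) hA_int hB_int
      _ ≤ (2 / (p - 2) * h ^ (2 - p)) + (2 / (p - 2) * h ^ (2 - p)) := by
          refine add_le_add (rect_bound p hpgt L h hh) ?_
          exact hBB'.trans (hswap.trans_le (rect_bound p hpgt L h hh))
      _ = 4 / (p - 2) * h ^ (2 - p) := by ring
end

section
/- Fix h > 0. Then lim_{α→2⁻} c_{2,α} ∫₀^h ∫₀^h (ξ²+η²)^{−α/2} dξ dη = 1, where c_{2,α} = 2^{α−1} α Γ((2+α)/2)/(π Γ(1−α/2)). -/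
open Filter MeasureTheory intervalIntegral

/-- Normalization constant of the 2D fractional Laplacian. -/
noncomputable def c2 (α : ℝ) : ℝ :=
  2 ^ (α - 1) * α * Real.Gamma ((2 + α) / 2) / (Real.pi * Real.Gamma (1 - α / 2))

open Set in
noncomputable def Gc (α : ℝ) : ℝ := ∫ t in (0:ℝ)..1, (1 + t ^ 2) ^ (-α / 2)

lemma inner_sub {α c : ℝ} (hc : 0 < c) :
    ∫ y in (0:ℝ)..c, (c ^ 2 + y ^ 2) ^ (-α / 2) = c ^ (1 - α) * Gc α := by
  have h1 := intervalIntegral.integral_comp_mul_left (a := 0) (b := 1)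
    (fun y => (c ^ 2 + y ^ 2) ^ (-α / 2)) hc.ne'
  simp only [mul_zero, mul_one, smul_eq_mul] at h1
  have h2 : ∀ t : ℝ, (c ^ 2 + (c * t) ^ 2) ^ (-α / 2)
      = c ^ (-α) * (1 + t ^ 2) ^ (-α / 2) := by
    intro t
    have hb : c ^ 2 + (c * t) ^ 2 = c ^ 2 * (1 + t ^ 2) := by ring
    rw [hb, Real.mul_rpow (by positivity) (by positivity)]
    congr 1
    rw [← Real.rpow_natCast c 2, ← Real.rpow_mul hc.le]
    congr 1
    push_cast
    ring
  rw [funext h2] at h1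
  rw [intervalIntegral.integral_const_mul] at h1
  rw [eq_comm, inv_mul_eq_iff_eq_mul₀ hc.ne'] at h1
  rw [Gc, h1, ← mul_assoc]
  congr 1
  nth_rewrite 1 [← Real.rpow_one c]
  rw [← Real.rpow_add hc, sub_eq_add_neg]

open Set in
lemma diag_null : (volume : Measure (ℝ × ℝ)) {p : ℝ × ℝ | p.1 = p.2} = 0 := by
  have hm : MeasurableSet {p : ℝ × ℝ | p.1 = p.2} :=
    measurableSet_eq_fun measurable_fst measurable_snd
  rw [Measure.volume_eq_prod, Measure.prod_apply hm]
  have hx : ∀ x : ℝ, (Prod.mk x ⁻¹' {p : ℝ × ℝ | p.1 = p.2}) = {x} := by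
    intro x; ext y; simp [eq_comm]
  simp [hx]

open Set in
lemma F_meas (α : ℝ) : Measurable (fun p : ℝ × ℝ => (p.1 ^ 2 + p.2 ^ 2) ^ (-α / 2)) := by
  fun_prop

open Set in
lemma int_sq {α h : ℝ} (hh : 0 ≤ h) (h0 : 0 < α) (h2 : α < 2) :
    IntegrableOn (fun p : ℝ × ℝ => (p.1 ^ 2 + p.2 ^ 2) ^ (-α / 2))
      (Ioc 0 h ×ˢ Ioc 0 h) := by
  have h1 : IntegrableOn (fun x : ℝ => x ^ (-α / 2)) (Ioc 0 h) volume := by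
    have := intervalIntegral.intervalIntegrable_rpow' (a := 0) (b := h) (r := -α / 2)
      (by linarith)
    rwa [intervalIntegrable_iff_integrableOn_Ioc_of_le hh] at this
  have hg : Integrable (fun p : ℝ × ℝ => p.1 ^ (-α / 2) * p.2 ^ (-α / 2))
      ((volume.restrict (Ioc 0 h)).prod (volume.restrict (Ioc 0 h))) :=
    Integrable.mul_prod h1 h1
  rw [Measure.prod_restrict, ← Measure.volume_eq_prod] at hg
  refine hg.mono ((F_meas α).aestronglyMeasurable.restrict) ?_
  filter_upwards [ae_restrict_mem ((measurableSet_Ioc).prod (measurableSet_Ioc))] with p hp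
  obtain ⟨⟨hp1, _⟩, ⟨hp2, _⟩⟩ := hp
  have hps : (0:ℝ) < p.1 * p.2 := mul_pos hp1 hp2
  rw [Real.norm_eq_abs, Real.norm_eq_abs, abs_of_nonneg (by positivity),
    abs_of_nonneg (by positivity)]
  calc (p.1 ^ 2 + p.2 ^ 2) ^ (-α / 2) ≤ (p.1 * p.2) ^ (-α / 2) :=
        Real.rpow_le_rpow_of_nonpos hps (by nlinarith) (by linarith)
    _ = p.1 ^ (-α / 2) * p.2 ^ (-α / 2) := Real.mul_rpow hp1.le hp2.le

open Set in
lemma swap_int (α : ℝ) (S : Set (ℝ × ℝ)) (hS : MeasurableSet S) :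
    ∫ p in Prod.swap ⁻¹' S, ((p.1 : ℝ) ^ 2 + p.2 ^ 2) ^ (-α / 2)
      = ∫ p in S, ((p.1 : ℝ) ^ 2 + p.2 ^ 2) ^ (-α / 2) := by
  have hmp : MeasurePreserving (Prod.swap : ℝ × ℝ → ℝ × ℝ) volume volume := by
    rw [Measure.volume_eq_prod]
    exact Measure.measurePreserving_swap
  have := hmp.setIntegral_preimage_emb
    (MeasurableEquiv.prodComm (α := ℝ) (β := ℝ)).measurableEmbedding
    (fun p : ℝ × ℝ => (p.1 ^ 2 + p.2 ^ 2) ^ (-α / 2)) S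
  rw [← this]
  apply setIntegral_congr_fun (measurableSet_preimage measurable_swap ?_) ?_
  · exact hS
  · intro p _
    simp only [Prod.fst_swap, Prod.snd_swap]
    rw [add_comm]

open Set in
lemma slice_tri {α h : ℝ} (hh : 0 < h) (h0 : 0 < α) (h2 : α < 2) :
    ∫ p in (Ioc 0 h ×ˢ Ioc 0 h) ∩ {p : ℝ × ℝ | p.2 < p.1},
        ((p.1 : ℝ) ^ 2 + p.2 ^ 2) ^ (-α / 2)
      = ∫ x in Ioc (0:ℝ) h, ∫ y in Ioo (0:ℝ) x, ((x:ℝ) ^ 2 + y ^ 2) ^ (-α / 2) := by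
  set F : ℝ × ℝ → ℝ := fun p => (p.1 ^ 2 + p.2 ^ 2) ^ (-α / 2) with hF
  set T : Set (ℝ × ℝ) := (Ioc 0 h ×ˢ Ioc 0 h) ∩ {p : ℝ × ℝ | p.2 < p.1} with hTdef
  have hT : MeasurableSet T :=
    (measurableSet_Ioc.prod measurableSet_Ioc).inter
      (measurableSet_lt measurable_snd measurable_fst)
  have hint : IntegrableOn F T := (int_sq hh.le h0 h2).mono_set inter_subset_left
  have hind : Integrable (T.indicator F) := hint.integrable_indicator hT
  rw [← MeasureTheory.integral_indicator hT]
  rw [Measure.volume_eq_prod] at hind ⊢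
  rw [integral_prod _ hind]
  have hcong : ∀ x : ℝ, (∫ y, T.indicator F (x, y))
      = (Ioc (0:ℝ) h).indicator (fun x => ∫ y in Ioo (0:ℝ) x, F (x, y)) x := by
    intro x
    by_cases hx : x ∈ Ioc (0:ℝ) h
    · have heq : (fun y => T.indicator F (x, y)) = (Ioo (0:ℝ) x).indicator (fun y => F (x, y)) := by
        funext y
        by_cases hy : y ∈ Ioo (0:ℝ) x
        · rw [indicator_of_mem hy, indicator_of_mem]
          exact ⟨⟨hx, ⟨hy.1, hy.2.le.trans hx.2⟩⟩, hy.2⟩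
        · rw [indicator_of_notMem hy, indicator_of_notMem]
          intro hmem
          exact hy ⟨hmem.1.2.1, hmem.2⟩
      rw [heq, MeasureTheory.integral_indicator measurableSet_Ioo, indicator_of_mem hx]
    · have heq : (fun y => T.indicator F (x, y)) = fun _ => (0:ℝ) := by
        funext y
        apply indicator_of_notMem
        intro hmem
        exact hx hmem.1.1
      rw [heq, indicator_of_notMem hx, integral_zero]
  rw [funext hcong, MeasureTheory.integral_indicator measurableSet_Ioc]

open Set in
lemma corner_formula {α h : ℝ} (hh : 0 < h) (h0 : 0 < α) (h2 : α < 2) :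
    (∫ η in (0:ℝ)..h, ∫ ξ in (0:ℝ)..h, ((ξ:ℝ) ^ 2 + η ^ 2) ^ (-α / 2))
      = 2 * Gc α * h ^ (2 - α) / (2 - α) := by
  set F : ℝ × ℝ → ℝ := fun p => (p.1 ^ 2 + p.2 ^ 2) ^ (-α / 2) with hF
  set s : Set ℝ := Ioc 0 h with hs
  set Q : Set (ℝ × ℝ) := s ×ˢ s with hQ
  set T : Set (ℝ × ℝ) := Q ∩ {p : ℝ × ℝ | p.2 < p.1} with hT
  set T' : Set (ℝ × ℝ) := Q ∩ {p : ℝ × ℝ | p.1 < p.2} with hT'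
  have hTm : MeasurableSet T :=
    (measurableSet_Ioc.prod measurableSet_Ioc).inter
      (measurableSet_lt measurable_snd measurable_fst)
  have hT'm : MeasurableSet T' :=
    (measurableSet_Ioc.prod measurableSet_Ioc).inter
      (measurableSet_lt measurable_fst measurable_snd)
  have hintQ : IntegrableOn F Q := int_sq hh.le h0 h2
  -- Step A : nested interval integral = set integral over the square
  have hA : (∫ η in (0:ℝ)..h, ∫ ξ in (0:ℝ)..h, ((ξ:ℝ) ^ 2 + η ^ 2) ^ (-α / 2))
      = ∫ p in Q, F p := by
    rw [intervalIntegral.integral_of_le hh.le]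
    have hinn : ∀ x : ℝ, (∫ ξ in (0:ℝ)..h, ((ξ:ℝ) ^ 2 + x ^ 2) ^ (-α / 2))
        = ∫ y in Ioc (0:ℝ) h, F (x, y) := by
      intro x
      rw [intervalIntegral.integral_of_le hh.le]
      apply setIntegral_congr_fun measurableSet_Ioc
      intro y _
      simp only [hF]
      rw [add_comm]
    rw [setIntegral_congr_fun measurableSet_Ioc (fun x _ => hinn x)]
    have hint' : Integrable (Function.uncurry fun x y => F (x, y))
        ((volume.restrict s).prod (volume.restrict s)) := by
      rw [Measure.prod_restrict, ← Measure.volume_eq_prod]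
      exact hintQ
    rw [MeasureTheory.integral_integral hint']
    rw [Measure.prod_restrict, ← Measure.volume_eq_prod]
  -- Step B : square = 2 * triangle
  have hQae : Q =ᵐ[volume] (T ∪ T' : Set (ℝ × ℝ)) := by
    rw [MeasureTheory.ae_eq_set]
    constructor
    · apply measure_mono_null ?_ diag_null
      intro p hp
      obtain ⟨hpQ, hpn⟩ := hp
      simp only [mem_union] at hpn
      push_neg at hpn
      have l1 : ¬ p.2 < p.1 := fun hlt => hpn.1 ⟨hpQ, hlt⟩
      have l2 : ¬ p.1 < p.2 := fun hlt => hpn.2 ⟨hpQ, hlt⟩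
      exact le_antisymm (not_lt.1 l1) (not_lt.1 l2)
    · have : (T ∪ T' : Set (ℝ × ℝ)) \ Q = ∅ := by
        apply diff_eq_empty.2
        exact union_subset inter_subset_left inter_subset_left
      rw [this]
      simp
  have hB : ∫ p in Q, F p = 2 * ∫ p in T, F p := by
    rw [setIntegral_congr_set hQae]
    rw [setIntegral_union ?disj hT'm (hintQ.mono_set inter_subset_left)
      (hintQ.mono_set inter_subset_left)]
    case disj =>
      apply Set.disjoint_left.2
      rintro p ⟨_, hp1⟩ hp2
      have hp2' : p.1 < p.2 := hp2.2
      have hp1' : p.2 < p.1 := hp1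
      exact absurd hp2' (not_lt.2 hp1'.le)
    have hswap : T' = Prod.swap ⁻¹' T := by
      ext p
      simp only [hT, hT', hQ, mem_inter_iff, mem_preimage, mem_prod, mem_setOf_eq,
        Prod.fst_swap, Prod.snd_swap]
      tauto
    have := swap_int α T hTm
    rw [hswap, this]
    ring
  -- Step C : triangle integral
  have hC : ∫ p in T, F p = Gc α * (h ^ (2 - α) / (2 - α)) := by
    rw [hT, hQ, hs, slice_tri hh h0 h2]
    have hinn : ∀ x : ℝ, x ∈ Ioc (0:ℝ) h →
        (∫ y in Ioo (0:ℝ) x, ((x:ℝ) ^ 2 + y ^ 2) ^ (-α / 2)) = x ^ (1 - α) * Gc α := by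
      intro x hx
      rw [← integral_Ioc_eq_integral_Ioo, ← intervalIntegral.integral_of_le hx.1.le]
      exact inner_sub hx.1
    rw [setIntegral_congr_fun measurableSet_Ioc hinn]
    rw [← intervalIntegral.integral_of_le hh.le]
    rw [intervalIntegral.integral_mul_const]
    rw [integral_rpow (Or.inl (by linarith))]
    rw [Real.zero_rpow (by linarith : (1:ℝ) - α + 1 ≠ 0)]
    rw [show (1:ℝ) - α + 1 = 2 - α by ring]
    ring
  rw [hA, hB, hC]
  ring

open Set in
lemma tendsto_Gc :
    Tendsto Gc (nhdsWithin 2 (Set.Iio 2)) (nhds (Real.pi / 4)) := by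
  have key : Tendsto (fun α : ℝ => ∫ t in Ioc (0:ℝ) 1, (1 + t ^ 2) ^ (-α / 2))
      (nhdsWithin 2 (Set.Iio 2))
      (nhds (∫ t in Ioc (0:ℝ) 1, (1 + t ^ 2) ^ (-(2:ℝ) / 2))) := by
    apply MeasureTheory.tendsto_integral_filter_of_dominated_convergence (fun _ => (1:ℝ))
    · filter_upwards with α
      apply Continuous.aestronglyMeasurable
      apply Continuous.rpow_const (by continuity)
      intro t; left; positivity
    · have hev : ∀ᶠ α : ℝ in nhdsWithin 2 (Set.Iio 2), (0:ℝ) < α :=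
        eventually_nhdsWithin_of_eventually_nhds (eventually_gt_nhds (by norm_num))
      filter_upwards [hev] with α hα
      filter_upwards with t
      rw [Real.norm_eq_abs, abs_of_nonneg (by positivity)]
      exact Real.rpow_le_one_of_one_le_of_nonpos (by nlinarith) (by linarith)
    · exact integrableOn_const (by simp) (by simp)
    · filter_upwards with t
      have hb : (0:ℝ) < 1 + t ^ 2 := by positivity
      have hc : ContinuousAt (fun α : ℝ => (1 + t ^ 2) ^ (-α / 2)) 2 := by
        apply ContinuousAt.comp (Real.continuousAt_const_rpow hb.ne')
        fun_prop
      exact (hc.tendsto.mono_left nhdsWithin_le_nhds)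
  have hval : (∫ t in Ioc (0:ℝ) 1, (1 + t ^ 2) ^ (-(2:ℝ) / 2)) = Real.pi / 4 := by
    have : ∀ t : ℝ, (1 + t ^ 2) ^ (-(2:ℝ) / 2) = 1 / (1 + t ^ 2) := by
      intro t
      rw [show (-(2:ℝ) / 2) = (-1 : ℝ) by norm_num, Real.rpow_neg_one, one_div]
    simp_rw [this]
    rw [← intervalIntegral.integral_of_le zero_le_one]
    rw [integral_one_div_one_add_sq, Real.arctan_one, Real.arctan_zero]
    ring
  rw [hval] at key
  apply key.congr
  intro α
  rw [Gc, intervalIntegral.integral_of_le zero_le_one]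

open Set in
lemma tendsto_hpow {h : ℝ} (hh : 0 < h) :
    Tendsto (fun α : ℝ => h ^ (2 - α)) (nhdsWithin 2 (Set.Iio 2)) (nhds 1) := by
  have hc : ContinuousAt (fun α : ℝ => h ^ (2 - α)) 2 := by
    apply ContinuousAt.comp (Real.continuousAt_const_rpow hh.ne')
    fun_prop
  have : (fun α : ℝ => h ^ (2 - α)) 2 = 1 := by simp
  have := hc.tendsto
  rw [show h ^ ((2:ℝ) - 2) = 1 by norm_num] at this
  exact this.mono_left nhdsWithin_le_nhds

open Set in
lemma tendsto_c2_ratio :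
    Tendsto (fun α : ℝ => c2 α / (2 - α)) (nhdsWithin 2 (Set.Iio 2))
      (nhds (2 / Real.pi)) := by
  set ψ : ℝ → ℝ := fun α =>
    2 ^ (α - 1) * α * Real.Gamma ((2 + α) / 2) / (2 * Real.pi * Real.Gamma (2 - α / 2))
    with hψ
  have heq : ∀ α : ℝ, α < 2 → c2 α / (2 - α) = ψ α := by
    intro α hα
    have h1 : (0:ℝ) < 1 - α / 2 := by linarith
    have hΓ : Real.Gamma (2 - α / 2) = (1 - α / 2) * Real.Gamma (1 - α / 2) := by
      rw [show (2:ℝ) - α / 2 = (1 - α / 2) + 1 by ring, Real.Gamma_add_one h1.ne']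
    have hΓpos : (0:ℝ) < Real.Gamma (1 - α / 2) := Real.Gamma_pos_of_pos h1
    rw [hψ, c2]
    simp only
    rw [div_div]
    congr 1
    rw [hΓ]
    ring
  have hcont : ContinuousAt ψ 2 := by
    apply ContinuousAt.div
    · apply ContinuousAt.mul
      · apply ContinuousAt.mul
        · exact (Real.continuousAt_const_rpow (by norm_num : (2:ℝ) ≠ 0)).comp
            (by fun_prop : ContinuousAt (fun α : ℝ => α - 1) 2)
        · exact continuousAt_id
      · have hg2 : ContinuousAt Real.Gamma (((2:ℝ) + 2) / 2) := by
          apply (Real.differentiableAt_Gamma ?_).continuousAt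
          intro m hcon
          have h0 : (0:ℝ) ≤ (m:ℝ) := Nat.cast_nonneg m
          have : ((2:ℝ) + 2) / 2 = 2 := by norm_num
          rw [this] at hcon
          linarith
        exact ContinuousAt.comp (f := fun α : ℝ => (2 + α) / 2) (g := Real.Gamma) hg2 (by fun_prop)
    · apply ContinuousAt.mul continuousAt_const
      have hg1 : ContinuousAt Real.Gamma ((2:ℝ) - 2 / 2) := by
        apply (Real.differentiableAt_Gamma ?_).continuousAt
        intro m hcon
        have h0 : (0:ℝ) ≤ (m:ℝ) := Nat.cast_nonneg m
        have : (2:ℝ) - 2 / 2 = 1 := by norm_num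
        rw [this] at hcon
        linarith
      exact ContinuousAt.comp (f := fun α : ℝ => 2 - α / 2) (g := Real.Gamma) hg1 (by fun_prop)
    · rw [show (2:ℝ) - 2 / 2 = 1 by norm_num, Real.Gamma_one]
      simp [Real.pi_ne_zero]
  have hψ2 : ψ 2 = 2 / Real.pi := by
    simp only [hψ]
    rw [show ((2:ℝ) + 2) / 2 = 2 by norm_num, show (2:ℝ) - 2 / 2 = 1 by norm_num,
      show (2:ℝ) - 1 = 1 by norm_num, Real.Gamma_two, Real.Gamma_one, Real.rpow_one]
    field_simp
  have := hcont.tendsto.mono_left (nhdsWithin_le_nhds (s := Set.Iio 2))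
  rw [hψ2] at this
  apply this.congr'
  filter_upwards [self_mem_nhdsWithin] with α hα
  exact (heq α hα).symm

/-- For fixed `h > 0`, `c_{2,α} ∫₀^h ∫₀^h (ξ²+η²)^{-α/2} dξ dη → 1` as `α → 2⁻`. -/
theorem c2_times_corner_integral_tendsto_one (h : ℝ) (hh : 0 < h) :
    Tendsto (fun α : ℝ =>
        c2 α * ∫ η in (0 : ℝ)..h, ∫ ξ in (0 : ℝ)..h, (ξ ^ 2 + η ^ 2) ^ (-α / 2))
      (nhdsWithin 2 (Set.Iio 2)) (nhds 1) := by
  have hprod : Tendsto (fun α : ℝ => 2 * Gc α * h ^ (2 - α) * (c2 α / (2 - α)))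
      (nhdsWithin 2 (Set.Iio 2))
      (nhds (2 * (Real.pi / 4) * 1 * (2 / Real.pi))) :=
    ((tendsto_const_nhds.mul tendsto_Gc).mul (tendsto_hpow hh)).mul tendsto_c2_ratio
  rw [show 2 * (Real.pi / 4) * 1 * (2 / Real.pi) = 1 by
    field_simp; ring] at hprod
  apply hprod.congr'
  have h01 : ∀ᶠ α : ℝ in nhdsWithin 2 (Set.Iio 2), (0:ℝ) < α :=
    eventually_nhdsWithin_of_eventually_nhds (eventually_gt_nhds (by norm_num))
  filter_upwards [h01, self_mem_nhdsWithin] with α hα0 hα2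
  rw [corner_formula hh hα0 hα2]
  ring
end
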